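/- Let θ ∈ ℝ with sin θ ≠ 0, and let B = diag(e^{iθ}, e^{−iθ}) ∈ SL(2,ℂ). Then for A ∈ SL(2,ℂ), A · conj(A) = B if and only if A = [[0, ρ·e^{i(θ+π)/2}],[−ρ⁻¹·e^{−i(θ+π)/2}, 0]] for some nonzero real number ρ. -/

import Mathlib

open Complex ComplexConjugate

theorem fiber_elliptic (θ : ℝ) (hθ : Real.sin θ ≠ 0)
    (A : Matrix (Fin 2) (Fin 2) ℂ) (hA : A.det = 1) :
    A * A.map (starRingEnd ℂ) =
        !![Complex.exp (Complex.I * θ), 0; 0, Complex.exp (-(Complex.I * θ))] ↔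
      ∃ ρ : ℝ, ρ ≠ 0 ∧
        A = !![0, (ρ : ℂ) * Complex.exp (Complex.I * ((θ + Real.pi) / 2));
               -(ρ : ℂ)⁻¹ * Complex.exp (-(Complex.I * ((θ + Real.pi) / 2))), 0] := by
  set φ : ℂ := Complex.I * ((θ + Real.pi) / 2) with hφdef
  have hE : Complex.exp φ ≠ 0 := Complex.exp_ne_zero _
  have hEn : Complex.exp (-φ) ≠ 0 := Complex.exp_ne_zero _
  have hφconj : conj φ = -φ := by simp [hφdef, map_ofNat]
  have hconjexp : conj (Complex.exp φ) = Complex.exp (-φ) := by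
    rw [← Complex.exp_conj, hφconj]
  have hconjexpneg : conj (Complex.exp (-φ)) = Complex.exp φ := by
    rw [← Complex.exp_conj, map_neg, hφconj, neg_neg]
  have hEE : Complex.exp (-φ) * Complex.exp φ = 1 := by
    rw [← Complex.exp_add]; simp
  have hsq : Complex.exp φ * Complex.exp φ = -Complex.exp (Complex.I * θ) := by
    rw [← Complex.exp_add, hφdef]
    have h2 : Complex.I * ((θ + Real.pi) / 2 : ℂ) + Complex.I * ((θ + Real.pi) / 2 : ℂ)
        = Complex.I * θ + Real.pi * Complex.I := by push_cast; ring
    rw [h2, Complex.exp_add, Complex.exp_pi_mul_I]; ring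
  have hsqn : Complex.exp (-φ) * Complex.exp (-φ) = -Complex.exp (-(Complex.I * θ)) := by
    have := congrArg (fun z => z⁻¹) hsq
    simp only [mul_inv, ← Complex.exp_neg] at this
    rw [this, inv_neg, ← Complex.exp_neg]
  constructor
  · intro h
    rw [Matrix.det_fin_two] at hA
    have e00 := congrFun (congrFun h 0) 0
    have e01 := congrFun (congrFun h 0) 1
    have e10 := congrFun (congrFun h 1) 0
    simp only [Matrix.mul_apply, Fin.sum_univ_two, Matrix.map_apply, Matrix.cons_val',
      Matrix.cons_val_zero, Matrix.cons_val_one, Matrix.head_cons, Matrix.empty_val',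
      Matrix.cons_val_fin_one, Matrix.head_fin_const, Matrix.of_apply] at e00 e01 e10
    -- e00 : A 0 0 * conj (A 0 0) + A 0 1 * conj (A 1 0) = exp (I θ)
    -- e01 : A 0 0 * conj (A 0 1) + A 0 1 * conj (A 1 1) = 0
    -- e10 : A 1 0 * conj (A 0 0) + A 1 1 * conj (A 1 0) = 0
    have him : (A 0 1 * conj (A 1 0)).im = Real.sin θ := by
      have h' : (A 0 0 * conj (A 0 0)).im + (A 0 1 * conj (A 1 0)).im = Real.sin θ := by
        rw [← Complex.add_im, e00, mul_comm, Complex.exp_ofReal_mul_I_im]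
      simpa [Complex.mul_conj] using h'
    have hb : A 0 1 ≠ 0 := by
      intro h0; apply hθ; rw [← him, h0]; simp
    have hcc : conj (A 1 0) ≠ 0 := by
      intro h0; apply hθ; rw [← him, h0]; simp
    have hc : A 1 0 ≠ 0 := by
      intro h0; exact hcc (by simp [h0])
    have e10c : conj (A 1 0) * A 0 0 + conj (A 1 1) * A 1 0 = 0 := by
      have := congrArg conj e10; simpa using this
    have hkey : A 0 0 * (A 1 0 * conj (A 0 1) - A 0 1 * conj (A 1 0)) = 0 := by
      linear_combination A 1 0 * e01 - A 0 1 * e10c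
    have hne : A 1 0 * conj (A 0 1) - A 0 1 * conj (A 1 0) ≠ 0 := by
      intro hz
      apply hθ
      rw [← him]
      have hzz : conj (A 0 1 * conj (A 1 0)) = A 0 1 * conj (A 1 0) := by
        rw [map_mul, Complex.conj_conj, mul_comm]
        exact sub_eq_zero.mp hz
      exact Complex.conj_eq_iff_im.mp hzz
    have ha : A 0 0 = 0 := by
      rcases mul_eq_zero.mp hkey with h' | h'
      · exact h'
      · exact absurd h' hne
    have hd : A 1 1 = 0 := by
      have h' : A 1 1 * conj (A 1 0) = 0 := by
        rw [ha] at e10; simpa using e10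
      rcases mul_eq_zero.mp h' with h'' | h''
      · exact h''
      · exact absurd h'' hcc
    have hbc : A 0 1 * A 1 0 = -1 := by
      rw [ha, hd] at hA; linear_combination -hA
    have hbcc : A 0 1 * conj (A 1 0) = Complex.exp (Complex.I * θ) := by
      rw [ha] at e00; simpa using e00
    have hconjbc : conj (A 0 1) * conj (A 1 0) = -1 := by
      have := congrArg conj hbc; simpa [mul_comm] using this
    set ρ0 : ℂ := A 0 1 * Complex.exp (-φ) with hρ0
    have hρ0ne : ρ0 ≠ 0 := mul_ne_zero hb hEn
    have hρreal : conj ρ0 = ρ0 := by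
      have h1 : conj ρ0 * Complex.exp φ = ρ0 * Complex.exp φ := by
        rw [hρ0, map_mul, hconjexpneg]
        calc conj (A 0 1) * Complex.exp φ * Complex.exp φ
            = conj (A 0 1) * (Complex.exp φ * Complex.exp φ) := by ring
          _ = conj (A 0 1) * (-Complex.exp (Complex.I * θ)) := by rw [hsq]
          _ = conj (A 0 1) * (-(A 0 1 * conj (A 1 0))) := by rw [hbcc]
          _ = -(A 0 1 * (conj (A 0 1) * conj (A 1 0))) := by ring
          _ = A 0 1 := by rw [hconjbc]; ring
          _ = A 0 1 * Complex.exp (-φ) * Complex.exp φ := by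
              rw [mul_assoc, hEE, mul_one]
      exact mul_right_cancel₀ hE h1
    obtain ⟨r, hr⟩ : ∃ r : ℝ, (r : ℂ) = ρ0 := ⟨ρ0.re, Complex.conj_eq_iff_re.mp hρreal⟩
    have hb' : A 0 1 = (r : ℂ) * Complex.exp φ := by
      rw [hr, hρ0, mul_assoc, hEE, mul_one]
    have hc' : A 1 0 = -(r : ℂ)⁻¹ * Complex.exp (-φ) := by
      rw [hr, hρ0]
      field_simp
      linear_combination hbc
    refine ⟨r, ?_, ?_⟩
    · intro h0
      apply hρ0ne
      rw [← hr, h0, Complex.ofReal_zero]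
    · rw [Matrix.eta_fin_two A, ha, hd, hb', hc']
  · rintro ⟨r, hrne, rfl⟩
    have hrne' : (r : ℂ) ≠ 0 := Complex.ofReal_ne_zero.mpr hrne
    ext i j
    fin_cases i <;> fin_cases j <;>
      simp only [Matrix.mul_apply, Fin.sum_univ_two, Matrix.map_apply, Matrix.cons_val',
        Matrix.cons_val_zero, Matrix.cons_val_one, Matrix.head_cons, Matrix.empty_val',
        Matrix.cons_val_fin_one, Matrix.head_fin_const, Matrix.of_apply, map_mul, map_neg,
        map_inv₀, map_zero, zero_mul, mul_zero, add_zero, zero_add,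
        Complex.conj_ofReal, hconjexp, hconjexpneg, Fin.isValue, Fin.zero_eta, Fin.mk_one]
    · calc (↑r : ℂ) * Complex.exp φ * (-(↑r)⁻¹ * Complex.exp φ)
          = -(↑r * (↑r)⁻¹) * (Complex.exp φ * Complex.exp φ) := by ring
        _ = Complex.exp (Complex.I * θ) := by
            rw [mul_inv_cancel₀ hrne', hsq]; ring
    · calc -(↑r : ℂ)⁻¹ * Complex.exp (-φ) * (↑r * Complex.exp (-φ))
          = -((↑r)⁻¹ * ↑r) * (Complex.exp (-φ) * Complex.exp (-φ)) := by ring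
        _ = Complex.exp (-(Complex.I * θ)) := by
            rw [inv_mul_cancel₀ hrne', hsqn]; ring
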